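/- Let F be a differential field with constants K. If M ∈ F^{n×n} is nonderogatory (its minimal polynomial equals its characteristic polynomial) and M M' = M' M, then M is of Type 1, i.e., M is an F-linear combination of pairwise commuting constant matrices over K. -/

import Mathlib

def IsDeriv {F : Type*} [Field F] (d : F → F) : Prop :=
  (∀ a b, d (a + b) = d a + d b) ∧ (∀ a b, d (a * b) = d a * b + a * d b)

/-- `M` is of Type 1: an `F`-linear combination of pairwise commuting matrices
with constant entries. -/
def IsType1 {F : Type*} [Field F] (d : F → F) {n : ℕ}
    (M : Matrix (Fin n) (Fin n) F) : Prop :=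
  ∃ (k : ℕ) (f : Fin k → F) (C : Fin k → Matrix (Fin n) (Fin n) F),
    (∀ j p q, d (C j p q) = 0) ∧
    (∀ i j, C i * C j = C j * C i) ∧
    M = ∑ j, f j • C j

open Polynomial

section DerivLemmas

variable {F : Type*} [Field F] {d : F → F}

theorem IsDeriv.zero' (hd : IsDeriv d) : d 0 = 0 := by
  have h : d 0 = d 0 + d 0 := by simpa using hd.1 0 0
  exact (left_eq_add.mp h)

theorem IsDeriv.one' (hd : IsDeriv d) : d 1 = 0 := by
  have h : d 1 = d 1 + d 1 := by simpa using hd.2 1 1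
  exact (left_eq_add.mp h)

theorem IsDeriv.sum' (hd : IsDeriv d) {ι : Type*} (s : Finset ι) (f : ι → F) :
    d (∑ i ∈ s, f i) = ∑ i ∈ s, d (f i) := by
  induction s using Finset.cons_induction with
  | empty => simpa using hd.zero'
  | cons a s ha ih => rw [Finset.sum_cons, Finset.sum_cons, hd.1, ih]

theorem IsDeriv.pow' (hd : IsDeriv d) (x : F) :
    ∀ m : ℕ, d (x ^ (m + 1)) = ((m : F) + 1) * x ^ m * d x := by
  intro m
  induction m with
  | zero => simp [pow_one]
  | succ m ih =>
    have hx : x ^ (m + 2) = x * x ^ (m + 1) := by ring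
    rw [hx, hd.2, ih]
    push_cast
    ring

theorem IsDeriv.eq_zero_of_finite [Finite F] (hd : IsDeriv d) (x : F) : d x = 0 := by
  haveI := Fintype.ofFinite F
  obtain ⟨m, hm⟩ : ∃ m, Fintype.card F = m + 1 :=
    ⟨Fintype.card F - 1, (Nat.succ_pred_eq_of_pos Fintype.card_pos).symm⟩
  have h1 : d x = d (x ^ (m + 1)) := by rw [← hm, FiniteField.pow_card]
  have h2 : ((m : F) + 1) = ((Fintype.card F : ℕ) : F) := by rw [hm]; push_cast; ring
  rw [h1, hd.pow', h2, FiniteField.cast_card_eq_zero, zero_mul, zero_mul]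

variable {n : ℕ}

theorem IsDeriv.map_add (hd : IsDeriv d) (A B : Matrix (Fin n) (Fin n) F) :
    (A + B).map d = A.map d + B.map d := by
  ext i j
  simp [Matrix.map_apply, Matrix.add_apply, hd.1]

theorem IsDeriv.map_smul (hd : IsDeriv d) (c : F) (A : Matrix (Fin n) (Fin n) F) :
    (c • A).map d = d c • A + c • A.map d := by
  ext i j
  simp [Matrix.map_apply, Matrix.smul_apply, Matrix.add_apply, smul_eq_mul, hd.2]

theorem IsDeriv.map_mul (hd : IsDeriv d) (A B : Matrix (Fin n) (Fin n) F) :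
    (A * B).map d = A.map d * B + A * B.map d := by
  ext i j
  simp only [Matrix.map_apply, Matrix.mul_apply, Matrix.add_apply]
  rw [hd.sum', ← Finset.sum_add_distrib]
  exact Finset.sum_congr rfl fun k _ => hd.2 _ _

theorem IsDeriv.map_zero' (hd : IsDeriv d) : (0 : Matrix (Fin n) (Fin n) F).map d = 0 := by
  ext i j
  simp [Matrix.map_apply, hd.zero']

theorem IsDeriv.map_one' (hd : IsDeriv d) : (1 : Matrix (Fin n) (Fin n) F).map d = 0 := by
  ext i j
  by_cases h : i = j <;> simp [Matrix.map_apply, Matrix.one_apply, h, hd.zero', hd.one']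

end DerivLemmas

section ConstBasis

variable {F : Type*} [Field F] {d : F → F} {V : Type*} [AddCommGroup V] [Module F V]
  [FiniteDimensional F V] {ι : Type*} [Fintype ι] [DecidableEq ι]

theorem rref_aux (ε : ι → V →ₗ[F] F) (hsep : ∀ v : V, (∀ i, ε i v = 0) → v = 0)
    (r : ℕ) : ∀ W : Submodule F V, Module.finrank F W = r →
    ∃ (s : Finset ι) (c : ι → V), (∀ j ∈ s, c j ∈ W) ∧
      (∀ j ∈ s, ∀ k ∈ s, ε k (c j) = if j = k then 1 else 0) ∧
      (∀ w ∈ W, ∃ f : ι → F, w = ∑ j ∈ s, f j • c j) := by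
  induction r using Nat.strong_induction_on with
  | _ r IH =>
  intro W hr
  by_cases hbot : W = ⊥
  · refine ⟨∅, fun _ => 0, by simp, by simp, ?_⟩
    intro w hw
    rw [hbot, Submodule.mem_bot] at hw
    exact ⟨fun _ => 0, by simp [hw]⟩
  · obtain ⟨w, hwW, hw0⟩ := (Submodule.ne_bot_iff W).mp hbot
    have hex : ∃ i0, ε i0 w ≠ 0 := by
      by_contra h
      push_neg at h
      exact hw0 (hsep w h)
    obtain ⟨i0, hi0⟩ := hex
    set u : V := (ε i0 w)⁻¹ • w with hu
    have huW : u ∈ W := W.smul_mem _ hwW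
    have hui0 : ε i0 u = 1 := by rw [hu, map_smul, smul_eq_mul, inv_mul_cancel₀ hi0]
    set W0 : Submodule F V := W ⊓ LinearMap.ker (ε i0) with hW0
    have hW0le : W0 ≤ W := inf_le_left
    have hlt : W0 < W := by
      refine lt_of_le_of_ne hW0le fun h => ?_
      have hu2 : u ∈ W0 := h.symm ▸ huW
      have := (Submodule.mem_inf.mp hu2).2
      rw [LinearMap.mem_ker, hui0] at this
      exact one_ne_zero this
    have hrank : Module.finrank F W0 < r := hr ▸ Submodule.finrank_lt_finrank_of_lt hlt
    obtain ⟨s0, c0, hc0W, hc0piv, hc0span⟩ := IH _ hrank W0 rfl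
    have hc0ker : ∀ j ∈ s0, ε i0 (c0 j) = 0 := fun j hj =>
      LinearMap.mem_ker.mp (Submodule.mem_inf.mp (hc0W j hj)).2
    have hi0s0 : i0 ∉ s0 := by
      intro h
      have h1 := hc0piv i0 h i0 h
      rw [if_pos rfl] at h1
      rw [hc0ker i0 h] at h1
      exact zero_ne_one h1
    set u' : V := u - ∑ j ∈ s0, (ε j u) • c0 j with hu'
    have hu'W : u' ∈ W :=
      W.sub_mem huW (Submodule.sum_mem _ fun j hj => W.smul_mem _ (hW0le (hc0W j hj)))
    have hu'i0 : ε i0 u' = 1 := by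
      rw [hu', map_sub, map_sum, hui0,
        Finset.sum_eq_zero fun j hj => by rw [map_smul, hc0ker j hj, smul_zero], sub_zero]
    have hu's0 : ∀ k ∈ s0, ε k u' = 0 := by
      intro k hk
      rw [hu', map_sub, map_sum,
        Finset.sum_congr rfl fun j hj => by rw [map_smul, hc0piv j hj k hk, smul_eq_mul]]
      simp only [mul_ite, mul_one, mul_zero]
      rw [Finset.sum_ite_eq' s0 k fun j => ε j u, if_pos hk, sub_self]
    refine ⟨insert i0 s0, fun j => if j = i0 then u' else c0 j, ?_, ?_, ?_⟩
    · intro j hj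
      by_cases h : j = i0
      · simpa [h] using hu'W
      · simp only [if_neg h]
        exact hW0le (hc0W j ((Finset.mem_insert.mp hj).resolve_left h))
    · intro j hj k hk
      dsimp only
      by_cases hji : j = i0
      · rw [if_pos hji]
        by_cases hki : k = i0
        · rw [if_pos (hji.trans hki.symm), hki]
          exact hu'i0
        · have hk0 : k ∈ s0 := (Finset.mem_insert.mp hk).resolve_left hki
          rw [if_neg (fun h : j = k => hki (h ▸ hji))]
          exact hu's0 k hk0
      · have hj0 : j ∈ s0 := (Finset.mem_insert.mp hj).resolve_left hji
        rw [if_neg hji]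
        by_cases hki : k = i0
        · rw [if_neg (fun h : j = k => hji (h.trans hki)), hki]
          exact hc0ker j hj0
        · exact hc0piv j hj0 k ((Finset.mem_insert.mp hk).resolve_left hki)
    · intro w' hw'
      have hw0' : w' - (ε i0 w') • u' ∈ W0 := by
        refine Submodule.mem_inf.mpr ⟨W.sub_mem hw' (W.smul_mem _ hu'W), ?_⟩
        rw [LinearMap.mem_ker, map_sub, map_smul, hu'i0, smul_eq_mul, mul_one, sub_self]
      obtain ⟨f0, hf0⟩ := hc0span _ hw0'
      refine ⟨fun j => if j = i0 then ε i0 w' else f0 j, ?_⟩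
      dsimp only
      rw [Finset.sum_insert hi0s0, if_pos rfl, if_pos rfl,
        Finset.sum_congr rfl fun j hj => by
          rw [if_neg (fun h : j = i0 => hi0s0 (h ▸ hj)), if_neg (fun h : j = i0 => hi0s0 (h ▸ hj))],
        ← hf0]
      abel

theorem const_span (hd : IsDeriv d) (ε : ι → V →ₗ[F] F)
    (hsep : ∀ v : V, (∀ i, ε i v = 0) → v = 0) (D : V → V)
    (hD : ∀ i v, ε i (D v) = d (ε i v)) (W : Submodule F V)
    (hstab : ∀ w ∈ W, D w ∈ W) :
    ∃ (k : ℕ) (c : Fin k → V), (∀ j, c j ∈ W) ∧ (∀ j, D (c j) = 0) ∧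
      ∀ w ∈ W, ∃ f : Fin k → F, w = ∑ j, f j • c j := by
  obtain ⟨s, c, hcW, hcpiv, hcspan⟩ := rref_aux ε hsep (Module.finrank F W) W rfl
  have hker : ∀ x ∈ W, (∀ k ∈ s, ε k x = 0) → x = 0 := by
    intro x hx h
    obtain ⟨f, hf⟩ := hcspan x hx
    have hf0 : ∀ k ∈ s, f k = 0 := by
      intro k hk
      have h1 := h k hk
      rw [hf, map_sum,
        Finset.sum_congr rfl fun j hj => by
          rw [map_smul, hcpiv j hj k hk, smul_eq_mul]] at h1
      simpa [mul_ite, Finset.sum_ite_eq' s k, hk] using h1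
    rw [hf, Finset.sum_congr rfl fun j hj => by rw [hf0 j hj, zero_smul],
      Finset.sum_const_zero]
  have hconst : ∀ j ∈ s, D (c j) = 0 := by
    intro j hj
    refine hker _ (hstab _ (hcW j hj)) fun k hk => ?_
    rw [hD, hcpiv j hj k hk]
    split_ifs
    · exact hd.one'
    · exact hd.zero'
  refine ⟨s.card, fun j => c (s.equivFin.symm j : {x // x ∈ s}),
    fun j => hcW _ (s.equivFin.symm j).2, fun j => hconst _ (s.equivFin.symm j).2, ?_⟩
  intro w hw
  obtain ⟨f, hf⟩ := hcspan w hw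
  refine ⟨fun j => f (s.equivFin.symm j : {x // x ∈ s}), ?_⟩
  calc w = ∑ j ∈ s, f j • c j := hf
    _ = ∑ x : {x // x ∈ s}, f (x : ι) • c (x : ι) := (Finset.sum_coe_sort s _).symm
    _ = ∑ j : Fin s.card, f (s.equivFin.symm j : {x // x ∈ s}) • c (s.equivFin.symm j : {x // x ∈ s}) :=
      (Equiv.sum_comp s.equivFin.symm fun x : {x // x ∈ s} => f (x : ι) • c (x : ι)).symm

end ConstBasis

/-- A nonderogatory matrix over a differential field that commutes with its
derivative is of Type 1. -/
theorem nonderogatory_is_type1 {F : Type*} [Field F] (d : F → F) (hd : IsDeriv d)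
    {n : ℕ} (M : Matrix (Fin n) (Fin n) F)
    (hnd : minpoly F M = M.charpoly)
    (hcomm : M * M.map d = M.map d * M) :
    IsType1 d M := by
  classical
  by_cases h0 : ∀ p q, d (M p q) = 0
  · exact ⟨1, fun _ => 1, fun _ => M, fun j => h0, fun _ _ => rfl, by simp⟩
  push_neg at h0
  obtain ⟨p0, q0, hpq0⟩ := h0
  haveI : Nonempty (Fin n) := ⟨p0⟩
  haveI : Infinite F := by
    refine not_finite_iff_infinite.mp fun h => ?_
    exact hpq0 (hd.eq_zero_of_finite _)
  set N := M.map d with hN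
  set p : F[X] := M.charpoly with hp
  have hpmonic : p.Monic := M.charpoly_monic
  have hpne : p ≠ 0 := hpmonic.ne_zero
  have hpdeg : p.natDegree = n := by
    rw [hp, Matrix.charpoly_natDegree_eq_dim, Fintype.card_fin]
  have haevalp : aeval M p = 0 := M.aeval_self_charpoly
  set fs := (UniqueFactorizationMonoid.normalizedFactors p).toFinset with hfs
  have hfactor : ∀ q ∈ fs, aeval M (p / q) ≠ 0 := by
    intro q hq
    have hqmem := Multiset.mem_toFinset.mp hq
    have hqprime : Prime q := UniqueFactorizationMonoid.prime_of_normalized_factor q hqmem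
    have hqdvd : q ∣ p := UniqueFactorizationMonoid.dvd_of_mem_normalizedFactors hqmem
    have hq0 : q ≠ 0 := hqprime.ne_zero
    have hmul : q * (p / q) = p := EuclideanDomain.mul_div_cancel' hq0 hqdvd
    have hpq0 : p / q ≠ 0 := fun h => hpne (by rw [← hmul, h, mul_zero])
    intro hz
    have hdle : p.degree ≤ (p / q).degree := by
      have := minpoly.degree_le_of_ne_zero F M hpq0 hz
      rwa [hnd] at this
    have hqdeg : 0 < q.natDegree :=
      natDegree_pos_iff_degree_pos.mpr (degree_pos_of_irreducible hqprime.irreducible)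
    have hltn : (p / q).natDegree < p.natDegree := by
      have hnm := natDegree_mul hq0 hpq0
      rw [hmul] at hnm
      rw [hnm]
      exact Nat.lt_add_of_pos_left hqdeg
    exact absurd hdle (not_le.mpr (degree_lt_degree hltn))
  set KK : F[X] → Submodule F (Fin n → F) :=
    fun q => LinearMap.ker (Matrix.toLin' (aeval M (p / q))) with hKK
  have hKne : ∀ q ∈ fs, KK q ≠ ⊤ := by
    intro q hq h
    apply hfactor q hq
    have h1 := LinearMap.ker_eq_top.mp h
    apply Matrix.toLin'.injective
    rw [h1, map_zero]
  have hexv : ∃ v : Fin n → F, ∀ q ∈ fs, v ∉ KK q := by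
    have hne : (⋃ P ∈ fs.image KK, (P : Set (Fin n → F))) ≠ Set.univ :=
      Subspace.biUnion_ne_univ_of_top_notMem (fun h => by
        obtain ⟨q, hq, hq'⟩ := Finset.mem_image.mp h
        exact hKne q hq hq')
    obtain ⟨v, hv⟩ := (Set.ne_univ_iff_exists_notMem _).mp hne
    refine ⟨v, fun q hq hvq => hv ?_⟩
    exact Set.mem_biUnion (Finset.mem_image_of_mem KK hq) hvq
  obtain ⟨v, hv⟩ := hexv
  set I : Ideal F[X] :=
    { carrier := {f | (aeval M f).mulVec v = 0}
      add_mem' := fun {a b} ha hb => by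
        simp only [Set.mem_setOf_eq] at *
        rw [map_add, Matrix.add_mulVec, ha, hb, add_zero]
      zero_mem' := by simp
      smul_mem' := fun c f hf => by
        simp only [Set.mem_setOf_eq] at *
        rw [smul_eq_mul, map_mul, ← Matrix.mulVec_mulVec, hf, Matrix.mulVec_zero] } with hI
  have hmemI : ∀ f : F[X], f ∈ I ↔ (aeval M f).mulVec v = 0 := fun f => Iff.rfl
  have hpI : p ∈ I := by rw [hmemI, haevalp, Matrix.zero_mulVec]
  have hgdvd : ∀ f, f ∈ I ↔ Submodule.IsPrincipal.generator I ∣ f := fun f =>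
    Submodule.IsPrincipal.mem_iff_generator_dvd I
  set g := Submodule.IsPrincipal.generator I with hg
  have hgp : g ∣ p := (hgdvd p).mp hpI
  have hpg : p ∣ g := by
    obtain ⟨cq, hcq⟩ := hgp
    by_cases hcu : IsUnit cq
    · obtain ⟨uu, rfl⟩ := hcu
      exact ⟨(uu⁻¹ : F[X]ˣ), by rw [hcq, mul_assoc, Units.mul_inv, mul_one]⟩
    · have hcq0 : cq ≠ 0 := fun h => hpne (by rw [hcq, h, mul_zero])
      obtain ⟨q', hq'irr, hq'dvd⟩ := WfDvdMonoid.exists_irreducible_factor hcu hcq0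
      obtain ⟨q, hqmem, hqassoc⟩ :=
        UniqueFactorizationMonoid.exists_mem_normalizedFactors_of_dvd hpne hq'irr
          (hq'dvd.trans ⟨g, by rw [hcq]; ring⟩)
      exfalso
      apply hv q (Multiset.mem_toFinset.mpr hqmem)
      have hq0 : q ≠ 0 := (UniqueFactorizationMonoid.prime_of_normalized_factor q hqmem).ne_zero
      have hqdvdp : q ∣ p := UniqueFactorizationMonoid.dvd_of_mem_normalizedFactors hqmem
      have hmul : q * (p / q) = p := EuclideanDomain.mul_div_cancel' hq0 hqdvdp
      have hgdvdpq : g ∣ p / q := by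
        obtain ⟨e, he⟩ := hq'dvd
        obtain ⟨uu, huu⟩ := hqassoc
        have heq : q * (g * (((uu⁻¹ : F[X]ˣ) : F[X]) * e)) = p := by
          rw [← huu, hcq, he]
          calc q' * (uu : F[X]) * (g * (((uu⁻¹ : F[X]ˣ) : F[X]) * e))
              = g * (q' * e) * ((uu : F[X]) * ((uu⁻¹ : F[X]ˣ) : F[X])) := by ring
            _ = g * (q' * e) := by rw [Units.mul_inv, mul_one]
        exact ⟨((uu⁻¹ : F[X]ˣ) : F[X]) * e, mul_left_cancel₀ hq0 (hmul.trans heq.symm)⟩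
      have hker : (aeval M (p / q)).mulVec v = 0 := (hmemI _).mp ((hgdvd _).mpr hgdvdpq)
      exact LinearMap.mem_ker.mpr (by rw [Matrix.toLin'_apply]; exact hker)
  have hann : ∀ f, (aeval M f).mulVec v = 0 → p ∣ f := fun f hf =>
    hpg.trans ((hgdvd f).mp hf)
  -- sum-mulVec helper
  have sum_mulVec : ∀ {ι : Type} (s : Finset ι) (A : ι → Matrix (Fin n) (Fin n) F)
      (w : Fin n → F), (∑ i ∈ s, A i).mulVec w = ∑ i ∈ s, (A i).mulVec w := by
    intro ι s A w
    rw [← Matrix.toLin'_apply, map_sum, LinearMap.sum_apply]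
    simp [Matrix.toLin'_apply]
  set b : Fin n → (Fin n → F) := fun k => (M ^ (k : ℕ)).mulVec v with hb
  have hli : LinearIndependent F b := by
    rw [Fintype.linearIndependent_iff]
    intro c hc i
    set f : F[X] := ∑ k : Fin n, C (c k) * X ^ (k : ℕ) with hf
    have haevalf : aeval M f = ∑ k : Fin n, c k • M ^ (k : ℕ) := by
      rw [hf, map_sum]
      exact Finset.sum_congr rfl fun k _ => by
        rw [map_mul, aeval_C, map_pow, aeval_X, ← Algebra.smul_def]
    have hfval : (aeval M f).mulVec v = 0 := by
      rw [haevalf, sum_mulVec]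
      rw [Finset.sum_congr rfl fun k _ => Matrix.smul_mulVec (c k) (M ^ (k : ℕ)) v]
      exact hc
    have hdvd : p ∣ f := hann f hfval
    have hfz : f = 0 := by
      by_contra hfne
      have hfd : f.natDegree < p.natDegree := by
        rw [hpdeg]
        have h1 : f.natDegree ≤ n - 1 := by
          refine natDegree_sum_le_of_forall_le _ _ fun k _ => ?_
          refine le_trans natDegree_mul_le ?_
          rw [natDegree_C, natDegree_X_pow, zero_add]
          exact Nat.le_pred_of_lt k.2
        have hn : 0 < n := i.pos
        exact lt_of_le_of_lt h1 (Nat.sub_lt hn one_pos)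
      exact hpmonic.not_dvd_of_natDegree_lt hfne hfd hdvd
    have hcoeff : f.coeff (i : ℕ) = c i := by
      rw [hf, finset_sum_coeff,
        Finset.sum_congr rfl fun k _ => by rw [coeff_C_mul, coeff_X_pow]]
      rw [Finset.sum_eq_single i]
      · simp
      · intro k _ hk
        rw [if_neg fun h => hk (Fin.ext h.symm), mul_zero]
      · intro h
        exact absurd (Finset.mem_univ i) h
    rw [← hcoeff, hfz, coeff_zero]
  have hcard : Fintype.card (Fin n) = Module.finrank F (Fin n → F) := by
    rw [Module.finrank_fin_fun, Fintype.card_fin]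
  set B := basisOfLinearIndependentOfCardEqFinrank hli hcard with hB
  have hBcoe : ∀ k, B k = b k := fun k => by
    rw [hB, coe_basisOfLinearIndependentOfCardEqFinrank]
  set r : Fin n → F := fun k => B.repr (N.mulVec v) k with hr
  have hNv : N.mulVec v = ∑ k, r k • b k := by
    conv_lhs => rw [← B.sum_repr (N.mulVec v)]
    exact Finset.sum_congr rfl fun k _ => by rw [hBcoe]
  set A : Matrix (Fin n) (Fin n) F := ∑ k : Fin n, r k • M ^ (k : ℕ) with hA
  have hAv : A.mulVec v = N.mulVec v := by
    rw [hA, hNv, sum_mulVec]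
    exact Finset.sum_congr rfl fun k _ => Matrix.smul_mulVec (r k) (M ^ (k : ℕ)) v
  have hMN : Commute M N := hcomm
  have hcommN : ∀ k : ℕ, N * M ^ k = M ^ k * N := fun k =>
    ((hMN.symm).pow_right k).eq
  have hcommA : ∀ k : ℕ, A * M ^ k = M ^ k * A := by
    intro k
    rw [hA, Finset.sum_mul, Finset.mul_sum]
    exact Finset.sum_congr rfl fun i _ => by
      rw [smul_mul_assoc, mul_smul_comm, ((Commute.refl M).pow_pow (i : ℕ) k).eq]
  have hNA : N = A := by
    apply Matrix.toLin'.injective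
    apply B.ext
    intro k
    rw [Matrix.toLin'_apply, Matrix.toLin'_apply, hBcoe, hb]
    rw [Matrix.mulVec_mulVec, Matrix.mulVec_mulVec, hcommN, hcommA,
      ← Matrix.mulVec_mulVec, ← Matrix.mulVec_mulVec, hAv]
  -- the span of powers of M
  set W : Submodule F (Matrix (Fin n) (Fin n) F) :=
    Submodule.span F (Set.range fun k : ℕ => M ^ k) with hW
  have hpowW : ∀ k : ℕ, M ^ k ∈ W := fun k => Submodule.subset_span ⟨k, rfl⟩
  have hMW : M ∈ W := by
    have := hpowW 1
    rwa [pow_one] at this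
  have hNW : N ∈ W := by
    rw [hNA, hA]
    exact Submodule.sum_mem _ fun k _ => Submodule.smul_mem _ _ (hpowW _)
  have hmulW0 : ∀ (j : ℕ), ∀ bb ∈ W, M ^ j * bb ∈ W := by
    intro j bb hbb
    induction hbb using Submodule.span_induction with
    | mem x hx =>
      obtain ⟨i, rfl⟩ := hx
      exact Submodule.subset_span ⟨j + i, by simp [pow_add]⟩
    | zero => rw [mul_zero]; exact W.zero_mem
    | add x y hx hy ihx ihy => rw [mul_add]; exact W.add_mem ihx ihy
    | smul c x hx ihx => rw [mul_smul_comm]; exact W.smul_mem _ ihx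
  have hmulW : ∀ a ∈ W, ∀ bb ∈ W, a * bb ∈ W := by
    intro a ha bb hbb
    induction ha using Submodule.span_induction with
    | mem x hx =>
      obtain ⟨j, rfl⟩ := hx
      exact hmulW0 j bb hbb
    | zero => rw [zero_mul]; exact W.zero_mem
    | add x y hx hy ihx ihy => rw [add_mul]; exact W.add_mem ihx ihy
    | smul c x hx ihx => rw [smul_mul_assoc]; exact W.smul_mem _ ihx
  have hcommW0 : ∀ (j : ℕ), ∀ bb ∈ W, Commute (M ^ j) bb := by
    intro j bb hbb
    induction hbb using Submodule.span_induction with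
    | mem x hx =>
      obtain ⟨i, rfl⟩ := hx
      exact (Commute.refl M).pow_pow j i
    | zero => exact Commute.zero_right _
    | add x y hx hy ihx ihy => exact ihx.add_right ihy
    | smul c x hx ihx => exact ihx.smul_right c
  have hcommW : ∀ a ∈ W, ∀ bb ∈ W, a * bb = bb * a := by
    intro a ha bb hbb
    induction ha using Submodule.span_induction with
    | mem x hx =>
      obtain ⟨j, rfl⟩ := hx
      exact (hcommW0 j bb hbb).eq
    | zero => rw [zero_mul, mul_zero]
    | add x y hx hy ihx ihy => rw [add_mul, mul_add, ihx, ihy]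
    | smul c x hx ihx => rw [smul_mul_assoc, mul_smul_comm, ihx]
  have hpowd : ∀ k : ℕ, (M ^ k).map d ∈ W := by
    intro k
    induction k with
    | zero => rw [pow_zero, hd.map_one']; exact W.zero_mem
    | succ k ih =>
      rw [pow_succ, hd.map_mul]
      exact W.add_mem (hmulW _ ih _ hMW) (hmulW _ (hpowW k) _ hNW)
  have hstabW : ∀ w ∈ W, w.map d ∈ W := by
    intro w hw
    have key : w ∈ W ∧ w.map d ∈ W := by
      induction hw using Submodule.span_induction with
      | mem x hx =>
        obtain ⟨k, rfl⟩ := hx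
        exact ⟨hpowW k, hpowd k⟩
      | zero => exact ⟨W.zero_mem, by rw [hd.map_zero']; exact W.zero_mem⟩
      | add x y hx hy ihx ihy =>
        exact ⟨W.add_mem ihx.1 ihy.1, by
          rw [hd.map_add]; exact W.add_mem ihx.2 ihy.2⟩
      | smul c x hx ihx =>
        exact ⟨W.smul_mem _ ihx.1, by
          rw [hd.map_smul]
          exact W.add_mem (W.smul_mem _ ihx.1) (W.smul_mem _ ihx.2)⟩
    exact key.2
  -- constant spanning family
  set ε : Fin n × Fin n → (Matrix (Fin n) (Fin n) F →ₗ[F] F) := fun i =>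
    { toFun := fun A => A i.1 i.2
      map_add' := fun _ _ => rfl
      map_smul' := fun _ _ => rfl } with hε
  obtain ⟨k, CC, hCW, hCc, hCspan⟩ :=
    const_span hd ε (fun A h => Matrix.ext fun i j => h (i, j)) (fun A => A.map d)
      (fun i A => rfl) W hstabW
  obtain ⟨f, hfM⟩ := hCspan M hMW
  exact ⟨k, f, CC, fun j pp qq => congrFun (congrFun (hCc j) pp) qq,
    fun i j => hcommW _ (hCW i) _ (hCW j), hfM⟩
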